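/- Pointwise exponential decay of radial energy functions: for every integer N ≥ 2 and every r₀ > 0 there exists a constant C(r₀,N) > 0 such that every v ∈ H¹_rad satisfies |v(r)| ≤ C(r₀,N) ‖v‖_{H¹} e^{−(N−1)r/2} for all r ≥ r₀. -/

import Mathlib

set_option maxHeartbeats 1000000


open MeasureTheory Set Filter Topology

/-- Membership in the radial energy space `H¹_rad` on hyperbolic space `ℍ^N`:
`v` is locally absolutely continuous on `(0,∞)` (expressed via the fundamental theorem
of calculus for its a.e. derivative) and both `v` and `v'` are square-integrable with
respect to the weight `(sinh s)^(N-1)`. -/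
def MemH1rad (N : ℕ) (v : ℝ → ℝ) : Prop :=
  (∀ a b : ℝ, 0 < a → a ≤ b → v b - v a = ∫ s in a..b, deriv v s) ∧
  MeasureTheory.IntegrableOn (fun s => (v s) ^ 2 * Real.sinh s ^ (N - 1)) (Set.Ioi 0) ∧
  MeasureTheory.IntegrableOn (fun s => (deriv v s) ^ 2 * Real.sinh s ^ (N - 1)) (Set.Ioi 0)

/-- The squared `H¹` norm `‖v‖_2² + ‖v'‖_2²` with weight `(sinh s)^(N-1)`. -/
noncomputable def H1normSq (N : ℕ) (v : ℝ → ℝ) : ℝ :=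
  (∫ s in Set.Ioi (0:ℝ), (v s) ^ 2 * Real.sinh s ^ (N - 1)) +
  (∫ s in Set.Ioi (0:ℝ), (deriv v s) ^ 2 * Real.sinh s ^ (N - 1))

/-- Pointwise exponential decay of radial energy functions. -/
theorem radial_energy_pointwise_decay
    (N : ℕ) (hN : 2 ≤ N) (r₀ : ℝ) (hr₀ : 0 < r₀) :
    ∃ C > (0:ℝ), ∀ v : ℝ → ℝ, MemH1rad N v → ∀ r ≥ r₀,
      |v r| ≤ C * Real.sqrt (H1normSq N v) * Real.exp (-((N : ℝ) - 1) * r / 2) := by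
  have hm1 : 1 ≤ N - 1 := by omega
  set m : ℕ := N - 1 with hm_def
  have hmcast : (m : ℝ) = (N : ℝ) - 1 := by
    rw [hm_def, Nat.cast_sub (by omega), Nat.cast_one]
  have hmpos : (0:ℝ) < (m : ℝ) := by
    rw [hmcast]; have : (2:ℝ) ≤ N := by exact_mod_cast hN
    linarith
  set c₀ : ℝ := (1 - Real.exp (-(2*r₀)))/2 with hc₀_def
  have hc₀ : 0 < c₀ := by
    have : Real.exp (-(2*r₀)) < 1 := Real.exp_lt_one_iff.2 (by linarith)
    rw [hc₀_def]; linarith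
  set c : ℝ := c₀ ^ m with hc_def
  have hc : 0 < c := pow_pos hc₀ m
  -- lower bound for the weight
  have hsinh_lb : ∀ s : ℝ, r₀ ≤ s → c * Real.exp ((m:ℝ) * s) ≤ Real.sinh s ^ m := by
    intro s hs
    have hs0 : 0 < s := lt_of_lt_of_le hr₀ hs
    have h1 : c₀ * Real.exp s ≤ Real.sinh s := by
      rw [Real.sinh_eq, hc₀_def]
      have h2 : Real.exp (-(2*s)) ≤ Real.exp (-(2*r₀)) := Real.exp_le_exp.2 (by linarith)
      have h3 : Real.exp (-s) = Real.exp s * Real.exp (-(2*s)) := by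
        rw [← Real.exp_add]; ring_nf
      have h4 : (0:ℝ) < Real.exp s := Real.exp_pos s
      rw [h3]
      calc (1 - Real.exp (-(2*r₀)))/2 * Real.exp s
          ≤ (1 - Real.exp (-(2*s)))/2 * Real.exp s := by nlinarith
        _ = (Real.exp s - Real.exp s * Real.exp (-(2*s)))/2 := by ring
    calc c * Real.exp ((m:ℝ) * s) = (c₀ * Real.exp s) ^ m := by
          rw [mul_pow, hc_def, Real.exp_nat_mul]
      _ ≤ Real.sinh s ^ m := by
          apply pow_le_pow_left₀ (by positivity) h1
  refine ⟨(Real.sqrt (c * m))⁻¹, by positivity, ?_⟩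
  intro v hv r hr
  obtain ⟨hftc, hI1, hI2⟩ := hv
  have hr0r : 0 < r := lt_of_lt_of_le hr₀ hr
  set I2 : ℝ := ∫ s in Set.Ioi (0:ℝ), (deriv v s) ^ 2 * Real.sinh s ^ (N - 1) with hI2_def
  set S : ℝ := H1normSq N v with hS_def
  have hwnn : ∀ s ∈ Set.Ioi (0:ℝ), (0:ℝ) ≤ Real.sinh s ^ (N-1) := by
    intro s hs
    exact pow_nonneg (Real.sinh_nonneg_iff.2 (le_of_lt hs)) m
  have hI1nn : 0 ≤ ∫ s in Set.Ioi (0:ℝ), (v s) ^ 2 * Real.sinh s ^ (N - 1) :=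
    setIntegral_nonneg measurableSet_Ioi (fun s hs => mul_nonneg (sq_nonneg _) (hwnn s hs))
  have hI2nn : 0 ≤ I2 :=
    setIntegral_nonneg measurableSet_Ioi (fun s hs => mul_nonneg (sq_nonneg _) (hwnn s hs))
  have hI2S : I2 ≤ S := by
    rw [hS_def, H1normSq]; linarith
  have hSnn : 0 ≤ S := le_trans hI2nn hI2S
  -- v^2 is a.e. measurable on Ioi 0
  have hv2meas : AEMeasurable (fun s => (v s)^2) (volume.restrict (Set.Ioi (0:ℝ))) := by
    have h1 : AEMeasurable (fun s => (v s)^2 * Real.sinh s ^ (N-1)) (volume.restrict (Set.Ioi (0:ℝ))) :=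
      hI1.aestronglyMeasurable.aemeasurable
    have h2 : AEMeasurable (fun s => ((v s)^2 * Real.sinh s ^ (N-1)) * (Real.sinh s ^ (N-1))⁻¹)
        (volume.restrict (Set.Ioi (0:ℝ))) :=
      h1.mul ((Real.measurable_sinh.pow_const (N-1)).inv.aemeasurable)
    apply h2.congr
    rw [Filter.EventuallyEq, ae_restrict_iff' measurableSet_Ioi]
    filter_upwards with s hs
    have : Real.sinh s ^ (N-1) ≠ 0 := by
      have := Real.sinh_pos_iff.2 hs
      positivity
    field_simp
  -- key a priori estimate
  have key : ∀ ε : ℝ, 0 < ε → |v r| ≤ ε/2 * S + Real.exp (-(m:ℝ)*r) / (2*ε*c*m) := by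
    intro ε hε
    -- estimate of the integral of |deriv v| on (r, R]
    have hB : ∀ R : ℝ, r ≤ R → |∫ s in r..R, deriv v s| ≤
        ε/2 * S + Real.exp (-(m:ℝ)*r) / (2*ε*c*m) := by
      intro R hrR
      have hIoc_sub : Set.Ioc r R ⊆ Set.Ioi (0:ℝ) := fun s hs => lt_trans hr0r hs.1
      have hint1 : IntegrableOn (fun s => (deriv v s)^2 * Real.sinh s ^ (N-1)) (Set.Ioc r R) :=
        hI2.mono_set hIoc_sub
      have hint2 : IntegrableOn (fun s => Real.exp (-(m:ℝ)*s)) (Set.Ioc r R) :=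
        (Real.continuous_exp.comp (continuous_const.mul continuous_id)).integrableOn_Ioc
      set g : ℝ → ℝ := fun s => ε/2 * ((deriv v s)^2 * Real.sinh s ^ (N-1))
          + 1/(2*ε*c) * Real.exp (-(m:ℝ)*s) with hg_def
      have hintg : IntegrableOn g (Set.Ioc r R) :=
        (hint1.const_mul _).add (hint2.const_mul _)
      -- pointwise bound
      have hpt : ∀ s ∈ Set.Ioc r R, |deriv v s| ≤ g s := by
        intro s hs
        have hsr₀ : r₀ ≤ s := le_trans hr (le_of_lt hs.1)
        have hwlb := hsinh_lb s hsr₀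
        have hexp : (0:ℝ) < Real.exp ((m:ℝ)*s) := Real.exp_pos _
        have hw : (0:ℝ) < Real.sinh s ^ (N-1) := lt_of_lt_of_le (by positivity) hwlb
        set d := deriv v s
        set w := Real.sinh s ^ (N-1)
        have hp : 0 < ε * w := mul_pos hε hw
        have hq : 2*|d| * (ε*w) ≤ (ε*w)^2 * d^2 + 1 := by
          nlinarith [sq_nonneg (ε*w*|d| - 1), sq_abs d]
        have h3 : 2*|d| ≤ ε*w*d^2 + 1/(ε*w) := by
          have h4 : 2*|d| ≤ ((ε*w)^2*d^2+1)/(ε*w) := by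
            rw [le_div_iff₀ hp]; linarith
          have h5 : ((ε*w)^2*d^2+1)/(ε*w) = ε*w*d^2 + 1/(ε*w) := by
            field_simp
          linarith [h4, h5.le]
        have h6 : 1/(ε*w) ≤ 1/(ε*(c*Real.exp ((m:ℝ)*s))) := by
          apply one_div_le_one_div_of_le (by positivity)
          exact mul_le_mul_of_nonneg_left hwlb hε.le
        have h7 : 1/(ε*(c*Real.exp ((m:ℝ)*s))) = 1/(ε*c) * Real.exp (-(m:ℝ)*s) := by
          have hE : Real.exp (-(m:ℝ)*s) = (Real.exp ((m:ℝ)*s))⁻¹ := by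
            rw [← Real.exp_neg, neg_mul]
          rw [hE, one_div, one_div, ← mul_inv, ← mul_assoc]
        rw [hg_def]
        have h8 := h3.trans (by linarith [h6, h7.le] : ε*w*d^2 + 1/(ε*w) ≤ ε*w*d^2 + 1/(ε*c) * Real.exp (-(m:ℝ)*s))
        have hinv : 1/(ε*c)/2 = 1/(2*ε*c) := by
          rw [div_div, mul_comm (ε*c) 2, ← mul_assoc]
        have h9 : ε/2*(d^2*w) = (ε*w*d^2)/2 := by ring
        have h10 : 1/(2*ε*c)*Real.exp (-(m:ℝ)*s) = (1/(ε*c)*Real.exp (-(m:ℝ)*s))/2 := by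
          rw [← hinv]; ring
        simp only
        linarith [h8, h9.le, h9.ge, h10.le, h10.ge]
      -- integrability of |deriv v|
      have habs : IntegrableOn (fun s => |deriv v s|) (Set.Ioc r R) := by
        apply Integrable.mono hintg ((measurable_deriv v).abs.aestronglyMeasurable)
        rw [ae_restrict_iff' measurableSet_Ioc]
        filter_upwards with s hs
        have h1 := hpt s hs
        have h2 : 0 ≤ g s := le_trans (abs_nonneg _) h1
        rw [Real.norm_eq_abs, Real.norm_eq_abs, abs_abs, abs_of_nonneg h2]
        exact h1
      have hd_int : IntegrableOn (deriv v) (Set.Ioc r R) := by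
        apply Integrable.mono hintg ((measurable_deriv v).aestronglyMeasurable)
        rw [ae_restrict_iff' measurableSet_Ioc]
        filter_upwards with s hs
        have h1 := hpt s hs
        have h2 : 0 ≤ g s := le_trans (abs_nonneg _) h1
        rw [Real.norm_eq_abs, Real.norm_eq_abs, abs_of_nonneg h2]
        exact h1
      -- chain of inequalities
      have e1 : |∫ s in r..R, deriv v s| ≤ ∫ s in Set.Ioc r R, |deriv v s| := by
        rw [intervalIntegral.integral_of_le hrR]
        calc |∫ s in Set.Ioc r R, deriv v s| = ‖∫ s in Set.Ioc r R, deriv v s‖ := (Real.norm_eq_abs _).symm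
          _ ≤ ∫ s in Set.Ioc r R, ‖deriv v s‖ := norm_integral_le_integral_norm _
          _ = ∫ s in Set.Ioc r R, |deriv v s| := by simp [Real.norm_eq_abs]
      have e2 : ∫ s in Set.Ioc r R, |deriv v s| ≤ ∫ s in Set.Ioc r R, g s :=
        setIntegral_mono_on habs hintg measurableSet_Ioc hpt
      have e3 : ∫ s in Set.Ioc r R, g s = ε/2 * (∫ s in Set.Ioc r R, (deriv v s)^2 * Real.sinh s ^ (N-1))
          + 1/(2*ε*c) * ∫ s in Set.Ioc r R, Real.exp (-(m:ℝ)*s) := by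
        rw [hg_def, integral_add (hint1.const_mul _) (hint2.const_mul _),
          MeasureTheory.integral_const_mul, MeasureTheory.integral_const_mul]
      have e4 : (∫ s in Set.Ioc r R, (deriv v s)^2 * Real.sinh s ^ (N-1)) ≤ I2 := by
        apply setIntegral_mono_set hI2
        · rw [Filter.EventuallyLE, ae_restrict_iff' measurableSet_Ioi]
          filter_upwards with s hs
          exact mul_nonneg (sq_nonneg _) (hwnn s hs)
        · exact (HasSubset.Subset.eventuallyLE hIoc_sub)
      have e5 : (∫ s in Set.Ioc r R, Real.exp (-(m:ℝ)*s)) ≤ Real.exp (-(m:ℝ)*r) / m := by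
        have hder : ∀ x ∈ Set.uIcc r R, HasDerivAt (fun y => -Real.exp (-(m:ℝ)*y)/(m:ℝ))
            (Real.exp (-(m:ℝ)*x)) x := by
          intro x _
          have h1 : HasDerivAt (fun y : ℝ => -(m:ℝ)*y) (-(m:ℝ)) x := by
            simpa using (hasDerivAt_id x).const_mul (-(m:ℝ))
          have h2 := (Real.hasDerivAt_exp (-(m:ℝ)*x)).comp x h1
          have h3 := (h2.neg).div_const (m:ℝ)
          convert h3 using 1
          case e'_9 =>
            have hm0 : (m:ℝ) ≠ 0 := hmpos.ne'
            field_simp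
          all_goals rfl
        have hcont : IntervalIntegrable (fun s => Real.exp (-(m:ℝ)*s)) volume r R :=
          (Real.continuous_exp.comp (continuous_const.mul continuous_id)).intervalIntegrable r R
        have hval : ∫ s in Set.Ioc r R, Real.exp (-(m:ℝ)*s)
            = (-Real.exp (-(m:ℝ)*R)/(m:ℝ)) - (-Real.exp (-(m:ℝ)*r)/(m:ℝ)) := by
          rw [← intervalIntegral.integral_of_le hrR]
          exact intervalIntegral.integral_eq_sub_of_hasDerivAt hder hcont
        have h9 : -Real.exp (-(m:ℝ)*R)/(m:ℝ) - -Real.exp (-(m:ℝ)*r)/(m:ℝ)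
            = (Real.exp (-(m:ℝ)*r) - Real.exp (-(m:ℝ)*R))/(m:ℝ) := by ring
        rw [hval, h9]
        gcongr
        linarith [Real.exp_pos (-(m:ℝ)*R)]
      calc |∫ s in r..R, deriv v s| ≤ ∫ s in Set.Ioc r R, g s := le_trans e1 e2
        _ = ε/2 * (∫ s in Set.Ioc r R, (deriv v s)^2 * Real.sinh s ^ (N-1))
            + 1/(2*ε*c) * ∫ s in Set.Ioc r R, Real.exp (-(m:ℝ)*s) := e3
        _ ≤ ε/2 * I2 + 1/(2*ε*c) * (Real.exp (-(m:ℝ)*r) / m) := by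
            have h1 : (0:ℝ) ≤ ε/2 := by positivity
            have h2 : (0:ℝ) ≤ 1/(2*ε*c) := by positivity
            have := mul_le_mul_of_nonneg_left e4 h1
            have := mul_le_mul_of_nonneg_left e5 h2
            linarith
        _ ≤ ε/2 * S + Real.exp (-(m:ℝ)*r) / (2*ε*c*m) := by
            have h1 : ε/2 * I2 ≤ ε/2 * S := mul_le_mul_of_nonneg_left hI2S (by positivity)
            have h2 : 1/(2*ε*c) * (Real.exp (-(m:ℝ)*r) / m) = Real.exp (-(m:ℝ)*r) / (2*ε*c*m) := by
              rw [div_mul_div_comm, one_mul]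
            linarith [h1, h2.le]
    -- the tail of v is small along a sequence
    have hδ : ∀ δ : ℝ, 0 < δ → ∃ R : ℝ, r < R ∧ |v R| < δ := by
      intro δ hδ0
      by_contra h
      push_neg at h
      -- v^2 is integrable on Ioi r
      have hv2int : IntegrableOn (fun s => (v s)^2) (Set.Ioi r) := by
        have hdom : IntegrableOn (fun s => (1/(c*Real.exp ((m:ℝ)*r))) * ((v s)^2 * Real.sinh s ^ (N-1)))
            (Set.Ioi r) := (hI1.mono_set (Set.Ioi_subset_Ioi hr0r.le)).const_mul _
        apply Integrable.mono hdom
        · exact ((hv2meas.mono_measure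
            (Measure.restrict_mono (Set.Ioi_subset_Ioi hr0r.le) le_rfl)).aestronglyMeasurable)
        · rw [ae_restrict_iff' measurableSet_Ioi]
          filter_upwards with s hs
          have hsr₀ : r₀ ≤ s := le_trans hr (le_of_lt hs)
          have hwlb := hsinh_lb s hsr₀
          have hexp_mono : Real.exp ((m:ℝ)*r) ≤ Real.exp ((m:ℝ)*s) := by
            apply Real.exp_le_exp.2
            exact mul_le_mul_of_nonneg_left (le_of_lt hs) hmpos.le
          have hk : (1:ℝ) ≤ (1/(c*Real.exp ((m:ℝ)*r))) * Real.sinh s ^ (N-1) := by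
            rw [div_mul_eq_mul_div, one_mul, le_div_iff₀ (by positivity)]
            calc 1 * (c * Real.exp ((m:ℝ)*r)) = c * Real.exp ((m:ℝ)*r) := by ring
              _ ≤ c * Real.exp ((m:ℝ)*s) := by nlinarith
              _ ≤ Real.sinh s ^ (N-1) := hwlb
          rw [Real.norm_eq_abs, Real.norm_eq_abs]
          have hwnn' : (0:ℝ) ≤ Real.sinh s ^ (N-1) := le_trans (by positivity) hwlb
          rw [abs_of_nonneg (sq_nonneg _), abs_of_nonneg (by positivity)]
          calc (v s)^2 = (v s)^2 * 1 := by ring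
            _ ≤ (v s)^2 * ((1/(c*Real.exp ((m:ℝ)*r))) * Real.sinh s ^ (N-1)) :=
              mul_le_mul_of_nonneg_left hk (sq_nonneg _)
            _ = 1/(c*Real.exp ((m:ℝ)*r)) * ((v s)^2 * Real.sinh s ^ (N-1)) := by ring
      -- but v^2 ≥ δ^2 on Ioi r, contradiction with infinite measure
      have hconst : IntegrableOn (fun _ : ℝ => δ^2) (Set.Ioi r) := by
        apply Integrable.mono hv2int aestronglyMeasurable_const
        rw [ae_restrict_iff' measurableSet_Ioi]
        filter_upwards with s hs
        have h1 := h s hs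
        rw [Real.norm_eq_abs, Real.norm_eq_abs, abs_of_nonneg (sq_nonneg δ),
          abs_of_nonneg (sq_nonneg _)]
        calc δ^2 ≤ |v s|^2 := by nlinarith [abs_nonneg (v s)]
          _ = (v s)^2 := sq_abs _
      rw [integrableOn_const_iff] at hconst
      rcases hconst with h0 | hfin
      · rw [enorm_eq_zero] at h0; nlinarith
      · rw [Real.volume_Ioi] at hfin
        exact lt_irrefl _ hfin
    -- conclude
    have : ∀ δ : ℝ, 0 < δ → |v r| ≤ (ε/2 * S + Real.exp (-(m:ℝ)*r) / (2*ε*c*m)) + δ := by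
      intro δ hδ0
      obtain ⟨R, hR1, hR2⟩ := hδ δ hδ0
      have hftc' := hftc r R hr0r (le_of_lt hR1)
      have : v r = v R - ∫ s in r..R, deriv v s := by linarith [hftc']
      rw [this]
      calc |v R - ∫ s in r..R, deriv v s| ≤ |v R| + |∫ s in r..R, deriv v s| := abs_sub _ _
        _ ≤ δ + (ε/2 * S + Real.exp (-(m:ℝ)*r) / (2*ε*c*m)) := by
            have := hB R (le_of_lt hR1)
            linarith [hR2.le]
        _ = (ε/2 * S + Real.exp (-(m:ℝ)*r) / (2*ε*c*m)) + δ := by ring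
    exact le_of_forall_pos_le_add this
  -- choose ε
  set E : ℝ := Real.exp (-((N:ℝ)-1) * r / 2) with hE_def
  have hE : 0 < E := Real.exp_pos _
  have hE2 : Real.exp (-(m:ℝ)*r) = E^2 := by
    rw [hE_def, ← Real.exp_nat_mul]
    congr 1
    rw [hmcast]
    push_cast
    ring
  rcases eq_or_lt_of_le hSnn with hS0 | hSpos
  · -- the norm vanishes
    have hv0 : |v r| ≤ 0 := by
      apply le_of_forall_pos_le_add
      intro η hη
      have hεp : 0 < Real.exp (-(m:ℝ)*r) / (2*c*(m:ℝ)*η) := by positivity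
      have hk := key _ hεp
      rw [← hS0] at hk
      have hcalc : Real.exp (-(m:ℝ)*r) /
          (2*(Real.exp (-(m:ℝ)*r) / (2*c*(m:ℝ)*η))*c*(m:ℝ)) = η := by
        have hX : Real.exp (-(m:ℝ)*r) ≠ 0 := (Real.exp_pos _).ne'
        field_simp
      rw [hcalc] at hk
      linarith
    rw [← hS0, Real.sqrt_zero]
    calc |v r| ≤ 0 := hv0
      _ ≤ (Real.sqrt (c*(m:ℕ)))⁻¹ * 0 * E := by simp
  · -- positive norm
    set t := Real.sqrt S with ht_def
    have ht : 0 < t := Real.sqrt_pos.2 hSpos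
    have ht2 : t^2 = S := Real.sq_sqrt hSnn
    set u := Real.sqrt (c*(m:ℝ)) with hu_def
    have hcm : (0:ℝ) < c*(m:ℝ) := by positivity
    have hu : 0 < u := Real.sqrt_pos.2 hcm
    have hu2 : u^2 = c*(m:ℝ) := Real.sq_sqrt hcm.le
    have hεpos : 0 < E/(u*t) := by positivity
    have hkey := key _ hεpos
    have hgoal : (E/(u*t))/2*S + Real.exp (-(m:ℝ)*r)/(2*(E/(u*t))*c*(m:ℝ)) = u⁻¹ * t * E := by
      rw [hE2, ← ht2]
      have h11 : 2*(E/(u*t))*c*(m:ℝ) = (E/(u*t))*2*u^2 := by rw [hu2]; ring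
      rw [h11]
      field_simp
      ring
    rw [hgoal] at hkey
    exact hkey
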